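/- Let x, y be probability vectors on n outcomes with nonincreasing positive components, x ≺ y, x ≠ y, and let U be the upper triangular row-stochastic matrix obtained via the canonical B-transform sequence with x = yU. Then H(x) ≥ (1 − α(U)) H(y) + Σ_i x_i log₂(1/(uU)_i) − (1 − α(U)) log₂ n > α(U) log₂ n + (1 − α(U)) H(y), where u = (1/n,...,1/n), H is Shannon entropy, and α(U) is the Dobrushin coefficient of U. -/

import Mathlib

open Finset Matrix

/-- Prefix sum of the first `k` components. -/
def psum {n : ℕ} (x : Fin n → ℝ) (k : ℕ) : ℝ :=
  ∑ i ∈ Finset.filter (fun i : Fin n => (i : ℕ) < k) Finset.univ, x i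

/-- `x` is majorized by `y` (both assumed sorted nonincreasingly). -/
def Maj {n : ℕ} (x y : Fin n → ℝ) : Prop :=
  (∀ k, k < n → psum x k ≤ psum y k) ∧ (∑ i, x i) = ∑ i, y i

/-- An A-transform: for `i < j` and `λ ∈ [0,1]`, replace `x i` by `x i + λ * x j`
and `x j` by `(1 - λ) * x j`. -/
def ATrans {n : ℕ} (x x' : Fin n → ℝ) : Prop :=
  ∃ (i j : Fin n) (lam : ℝ), i < j ∧ 0 ≤ lam ∧ lam ≤ 1 ∧
    x' = Function.update (Function.update x i (x i + lam * x j)) j ((1 - lam) * x j)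

/-- A B-transform: for `i < j` and `λ ∈ [0,1]`, replace `y i` by `(1 - λ) * y i`
and `y j` by `y j + λ * y i`. -/
def BTrans {n : ℕ} (y y' : Fin n → ℝ) : Prop :=
  ∃ (i j : Fin n) (lam : ℝ), i < j ∧ 0 ≤ lam ∧ lam ≤ 1 ∧
    y' = Function.update (Function.update y i ((1 - lam) * y i)) j (y j + lam * y i)

/-- Lower triangular row-stochastic matrix. -/
def LowerRS {n : ℕ} (L : Matrix (Fin n) (Fin n) ℝ) : Prop :=
  (∀ i j, 0 ≤ L i j) ∧ (∀ i j : Fin n, i < j → L i j = 0) ∧ (∀ i, ∑ j, L i j = 1)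

/-- Upper triangular row-stochastic matrix. -/
def UpperRS {n : ℕ} (U : Matrix (Fin n) (Fin n) ℝ) : Prop :=
  (∀ i j, 0 ≤ U i j) ∧ (∀ i j : Fin n, j < i → U i j = 0) ∧ (∀ i, ∑ j, U i j = 1)

/-- The matrix of a B-transform with indices `i < j` and coefficient `lam`. -/
def BMat {n : ℕ} (i j : Fin n) (lam : ℝ) : Matrix (Fin n) (Fin n) ℝ :=
  fun a b =>
    if a = i then (if b = i then 1 - lam else if b = j then lam else 0)
    else (if a = b then 1 else 0)

/-- A canonical B-transform chain from `y` down to `x`: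
`z 0 = y`, `z s = x`, and at each step `t < s` the index `jj t` is the largest
index where `z t` exceeds `x`, `kk t` is the smallest index above `jj t` where
`x` exceeds `z t`, and `lam t = min (z t (jj t) - x (jj t)) (x (kk t) - z t (kk t)) / z t (jj t)`,
with `z (t+1) = (z t) ⬝ᵥ BMat (jj t) (kk t) (lam t)` (row-vector times matrix). -/
structure CanonChain {n : ℕ} (x y : Fin n → ℝ) (s : ℕ)
    (z : ℕ → Fin n → ℝ) (jj kk : ℕ → Fin n) (lam : ℕ → ℝ) : Prop where
  z_zero : z 0 = y
  z_last : z s = x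
  lt : ∀ t < s, jj t < kk t
  j_big : ∀ t < s, x (jj t) < z t (jj t)
  j_largest : ∀ t < s, ∀ i : Fin n, jj t < i → z t i ≤ x i
  k_small : ∀ t < s, z t (kk t) < x (kk t)
  k_smallest : ∀ t < s, ∀ i : Fin n, jj t < i → i < kk t → x i ≤ z t i
  lam_def : ∀ t < s,
    lam t = min (z t (jj t) - x (jj t)) (x (kk t) - z t (kk t)) / z t (jj t)
  step : ∀ t < s, z (t + 1) = Matrix.vecMul (z t) (BMat (jj t) (kk t) (lam t))

/-- Dobrushin coefficient of ergodicity. -/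
noncomputable def dobrushin {n : ℕ} (C : Matrix (Fin n) (Fin n) ℝ) : ℝ :=
  ⨅ p : Fin n × Fin n, ∑ i, min (C p.1 i) (C p.2 i)

/-- Shannon entropy (base 2). -/
noncomputable def shannonH {n : ℕ} (p : Fin n → ℝ) : ℝ :=
  -∑ i, p i * Real.logb 2 (p i)

section AuxKL
open intervalIntegral

lemma uIcc_pos (t γ : ℝ) (ht : 1 ≤ t) (hγ : γ ∈ Set.uIcc 1 t) : 0 < γ := by
  rw [Set.uIcc_of_le ht] at hγ; linarith [hγ.1]

lemma intg_inv (t : ℝ) (ht : 1 ≤ t) :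
    IntervalIntegrable (fun γ : ℝ => 1 / γ) MeasureTheory.volume 1 t := by
  apply ContinuousOn.intervalIntegrable
  exact ContinuousOn.div continuousOn_const continuousOn_id
    (fun x hx => (uIcc_pos t x ht hx).ne')

lemma intg_invsq (t : ℝ) (ht : 1 ≤ t) :
    IntervalIntegrable (fun γ : ℝ => 1 / γ ^ 2) MeasureTheory.volume 1 t := by
  apply ContinuousOn.intervalIntegrable
  exact ContinuousOn.div continuousOn_const (continuous_id.pow 2).continuousOn
    (fun x hx => by have := uIcc_pos t x ht hx; positivity)

lemma int_invsq (t : ℝ) (ht : 1 ≤ t) :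
    ∫ γ in (1:ℝ)..t, 1 / γ ^ 2 = 1 - 1 / t := by
  have h0 : (0:ℝ) ∉ Set.uIcc 1 t := fun h => absurd (uIcc_pos t 0 ht h) (lt_irrefl 0)
  have : ∀ γ ∈ Set.uIcc (1:ℝ) t, 1 / γ ^ 2 = γ ^ (-2 : ℤ) := by
    intro γ hγ
    have hγ0 : γ ≠ 0 := (uIcc_pos t γ ht hγ).ne'
    rw [_root_.zpow_neg]
    norm_num
  rw [integral_congr this, integral_zpow (Or.inr ⟨by norm_num, h0⟩)]
  have ht0 : t ≠ 0 := by positivity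
  norm_num
  rw [div_neg, div_one, neg_sub, inv_eq_one_div]

lemma part1 (p q t : ℝ) (ht : 1 ≤ t) :
    ∫ γ in (1:ℝ)..t, (p - γ * q) / γ = p * Real.log t - q * (t - 1) := by
  have h0 : (0:ℝ) ∉ Set.uIcc 1 t := fun h => absurd (uIcc_pos t 0 ht h) (lt_irrefl 0)
  have heq : ∀ γ ∈ Set.uIcc (1:ℝ) t, (p - γ * q) / γ = p * (1/γ) - q := by
    intro γ hγ
    have hγ0 : γ ≠ 0 := (uIcc_pos t γ ht hγ).ne'
    field_simp
  rw [integral_congr heq, intervalIntegral.integral_sub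
      ((intg_inv t ht).const_mul p) intervalIntegrable_const,
    intervalIntegral.integral_const_mul, integral_one_div h0, intervalIntegral.integral_const]
  simp [smul_eq_mul]
  ring_nf

lemma part2 (p q t : ℝ) (ht : 1 ≤ t) :
    ∫ γ in (1:ℝ)..t, (q - γ * p) / γ ^ 2 = q * (1 - 1/t) - p * Real.log t := by
  have h0 : (0:ℝ) ∉ Set.uIcc 1 t := fun h => absurd (uIcc_pos t 0 ht h) (lt_irrefl 0)
  have heq : ∀ γ ∈ Set.uIcc (1:ℝ) t, (q - γ * p) / γ ^ 2 = q * (1/γ^2) - p * (1/γ) := by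
    intro γ hγ
    have hγ0 : γ ≠ 0 := (uIcc_pos t γ ht hγ).ne'
    field_simp
  rw [integral_congr heq, intervalIntegral.integral_sub
      ((intg_invsq t ht).const_mul q) ((intg_inv t ht).const_mul p),
    intervalIntegral.integral_const_mul, intervalIntegral.integral_const_mul,
    integral_one_div h0, int_invsq t ht]
  norm_num

lemma intg1 (a b M : ℝ) (hM : 1 ≤ M) :
    IntervalIntegrable (fun γ : ℝ => max (a - γ * b) 0 / γ) MeasureTheory.volume 1 M := by
  apply ContinuousOn.intervalIntegrable
  exact ContinuousOn.div
    ((continuous_const.sub (continuous_id.mul continuous_const)).max continuous_const).continuousOn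
    continuousOn_id (fun x hx => (uIcc_pos M x hM hx).ne')

lemma intg2 (a b M : ℝ) (hM : 1 ≤ M) :
    IntervalIntegrable (fun γ : ℝ => max (a - γ * b) 0 / γ ^ 2) MeasureTheory.volume 1 M := by
  apply ContinuousOn.intervalIntegrable
  exact ContinuousOn.div
    ((continuous_const.sub (continuous_id.mul continuous_const)).max continuous_const).continuousOn
    (continuous_id.pow 2).continuousOn (fun x hx => by have := uIcc_pos M x hM hx; positivity)

/-- integrability on arbitrary positive subinterval -/
lemma intg1' (a b u v : ℝ) (hu : 1 ≤ u) (hv : 1 ≤ v) :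
    IntervalIntegrable (fun γ : ℝ => max (a - γ * b) 0 / γ) MeasureTheory.volume u v := by
  apply ContinuousOn.intervalIntegrable
  apply ContinuousOn.div
    ((continuous_const.sub (continuous_id.mul continuous_const)).max continuous_const).continuousOn
    continuousOn_id
  intro x hx
  have : (0:ℝ) < x := by rcases Set.mem_uIcc.1 hx with h | h <;> linarith [h.1]
  exact this.ne'

lemma intg2' (a b u v : ℝ) (hu : 1 ≤ u) (hv : 1 ≤ v) :
    IntervalIntegrable (fun γ : ℝ => max (a - γ * b) 0 / γ ^ 2) MeasureTheory.volume u v := by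
  apply ContinuousOn.intervalIntegrable
  apply ContinuousOn.div
    ((continuous_const.sub (continuous_id.mul continuous_const)).max continuous_const).continuousOn
    (continuous_id.pow 2).continuousOn
  intro x hx
  have : 0 < x := by
    rcases Set.mem_uIcc.1 hx with h | h
    · linarith [h.1]
    · linarith [h.1]
  exact pow_ne_zero 2 this.ne'

/-- scalar identity -/
lemma scalar_id (p q M : ℝ) (hp : 0 < p) (hq : 0 < q) (hM : 1 ≤ M)
    (h1 : p / q ≤ M) (h2 : q / p ≤ M) :
    (∫ γ in (1:ℝ)..M, max (p - γ * q) 0 / γ) +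
      (∫ γ in (1:ℝ)..M, max (q - γ * p) 0 / γ ^ 2) =
    p * Real.log (p / q) - p + q := by
  rcases le_total q p with hqp | hpq
  · -- q ≤ p : second integral is 0
    have t : ℝ := p / q
    have ht1 : 1 ≤ p / q := (one_le_div hq).2 hqp
    have hz2 : ∀ γ ∈ Set.uIcc (1:ℝ) M, max (q - γ * p) 0 / γ ^ 2 = 0 := by
      intro γ hγ
      have h1γ : (1:ℝ) ≤ γ := by rw [Set.uIcc_of_le hM] at hγ; exact hγ.1
      have : q - γ * p ≤ 0 := by nlinarith
      rw [max_eq_right this, zero_div]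
    have hsplit : (∫ γ in (1:ℝ)..(p/q), max (p - γ * q) 0 / γ)
        + (∫ γ in (p/q)..M, max (p - γ * q) 0 / γ)
        = ∫ γ in (1:ℝ)..M, max (p - γ * q) 0 / γ :=
      intervalIntegral.integral_add_adjacent_intervals
        (intg1' p q 1 (p/q) le_rfl ht1) (intg1' p q (p/q) M ht1 hM)
    have hz1 : ∀ γ ∈ Set.uIcc (p/q) M, max (p - γ * q) 0 / γ = 0 := by
      intro γ hγ
      have h1γ : p / q ≤ γ := by rw [Set.uIcc_of_le h1] at hγ; exact hγ.1
      have : p - γ * q ≤ 0 := by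
        have := (div_le_iff₀ hq).1 h1γ
        linarith
      rw [max_eq_right this, zero_div]
    have hpos : ∀ γ ∈ Set.uIcc (1:ℝ) (p/q), max (p - γ * q) 0 / γ = (p - γ * q) / γ := by
      intro γ hγ
      rw [Set.uIcc_of_le ht1] at hγ
      have : 0 ≤ p - γ * q := by
        have := (le_div_iff₀ hq).1 hγ.2
        linarith
      rw [max_eq_left this]
    rw [integral_congr hz2, integral_congr (g := fun _ => (0:ℝ)) hz1] at *
    rw [intervalIntegral.integral_zero] at *
    rw [← hsplit, integral_congr hpos, part1 p q _ ht1]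
    rw [Real.log_div hp.ne' hq.ne'] at *
    field_simp
    ring
  · -- p ≤ q : first integral is 0
    have ht1 : 1 ≤ q / p := (one_le_div hp).2 hpq
    have hz2 : ∀ γ ∈ Set.uIcc (1:ℝ) M, max (p - γ * q) 0 / γ = 0 := by
      intro γ hγ
      have h1γ : (1:ℝ) ≤ γ := by rw [Set.uIcc_of_le hM] at hγ; exact hγ.1
      have : p - γ * q ≤ 0 := by nlinarith
      rw [max_eq_right this, zero_div]
    have hsplit : (∫ γ in (1:ℝ)..(q/p), max (q - γ * p) 0 / γ ^ 2)
        + (∫ γ in (q/p)..M, max (q - γ * p) 0 / γ ^ 2)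
        = ∫ γ in (1:ℝ)..M, max (q - γ * p) 0 / γ ^ 2 :=
      intervalIntegral.integral_add_adjacent_intervals
        (intg2' q p 1 (q/p) le_rfl ht1) (intg2' q p (q/p) M ht1 hM)
    have hz1 : ∀ γ ∈ Set.uIcc (q/p) M, max (q - γ * p) 0 / γ ^ 2 = 0 := by
      intro γ hγ
      have h1γ : q / p ≤ γ := by rw [Set.uIcc_of_le h2] at hγ; exact hγ.1
      have : q - γ * p ≤ 0 := by
        have := (div_le_iff₀ hp).1 h1γ
        linarith
      rw [max_eq_right this, zero_div]
    have hpos : ∀ γ ∈ Set.uIcc (1:ℝ) (q/p), max (q - γ * p) 0 / γ ^ 2 = (q - γ * p) / γ ^ 2 := by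
      intro γ hγ
      rw [Set.uIcc_of_le ht1] at hγ
      have : 0 ≤ q - γ * p := by
        have := (le_div_iff₀ hp).1 hγ.2
        linarith
      rw [max_eq_left this]
    rw [integral_congr hz2, integral_congr (g := fun _ => (0:ℝ)) hz1] at *
    rw [intervalIntegral.integral_zero] at *
    rw [← hsplit, integral_congr hpos, part2 p q _ ht1]
    have hlog : Real.log (q / p) = - Real.log (p / q) := by
      rw [Real.log_div hq.ne' hp.ne', Real.log_div hp.ne' hq.ne']; ring
    rw [hlog]
    have hqp0 : q / p ≠ 0 := by positivity
    field_simp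
    ring

noncomputable def Dkl {n : ℕ} (p q : Fin n → ℝ) : ℝ := ∑ i, p i * Real.log (p i / q i)

lemma contSum {n : ℕ} (p q : Fin n → ℝ) :
    Continuous (fun γ : ℝ => (∑ i, max (p i - γ * q i) 0)) :=
  continuous_finset_sum _ fun _ _ =>
    (continuous_const.sub (continuous_id.mul continuous_const)).max continuous_const

lemma intgF {n : ℕ} (p q : Fin n → ℝ) (M : ℝ) (hM : 1 ≤ M) :
    IntervalIntegrable (fun γ : ℝ => (∑ i, max (p i - γ * q i) 0) / γ)
      MeasureTheory.volume 1 M := by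
  apply ContinuousOn.intervalIntegrable
  exact ContinuousOn.div (contSum p q).continuousOn continuousOn_id
    (fun x hx => (uIcc_pos M x hM hx).ne')

lemma intgG {n : ℕ} (p q : Fin n → ℝ) (M : ℝ) (hM : 1 ≤ M) :
    IntervalIntegrable (fun γ : ℝ => (∑ i, max (p i - γ * q i) 0) / γ ^ 2)
      MeasureTheory.volume 1 M := by
  apply ContinuousOn.intervalIntegrable
  exact ContinuousOn.div (contSum p q).continuousOn (continuous_id.pow 2).continuousOn
    (fun x hx => by have := uIcc_pos M x hM hx; positivity)

/-- Sum identity: KL as an integral of hockey-stick divergences. -/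
lemma sum_id {n : ℕ} (p q : Fin n → ℝ) (hp : ∀ i, 0 < p i) (hq : ∀ i, 0 < q i)
    (hp1 : ∑ i, p i = 1) (hq1 : ∑ i, q i = 1) (M : ℝ) (hM : 1 ≤ M)
    (h1 : ∀ i, p i / q i ≤ M) (h2 : ∀ i, q i / p i ≤ M) :
    (∫ γ in (1:ℝ)..M, (∑ i, max (p i - γ * q i) 0) / γ) +
      (∫ γ in (1:ℝ)..M, (∑ i, max (q i - γ * p i) 0) / γ ^ 2) = Dkl p q := by
  have e1 : (∫ γ in (1:ℝ)..M, (∑ i, max (p i - γ * q i) 0) / γ)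
      = ∑ i, ∫ γ in (1:ℝ)..M, max (p i - γ * q i) 0 / γ := by
    rw [← intervalIntegral.integral_finset_sum (fun i _ => intg1 (p i) (q i) M hM)]
    apply integral_congr; intro γ _; simp only []; rw [Finset.sum_div]
  have e2 : (∫ γ in (1:ℝ)..M, (∑ i, max (q i - γ * p i) 0) / γ ^ 2)
      = ∑ i, ∫ γ in (1:ℝ)..M, max (q i - γ * p i) 0 / γ ^ 2 := by
    rw [← intervalIntegral.integral_finset_sum (fun i _ => intg2 (q i) (p i) M hM)]
    apply integral_congr; intro γ _; simp only []; rw [Finset.sum_div]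
  rw [e1, e2, ← Finset.sum_add_distrib]
  have : ∀ i ∈ Finset.univ, (∫ γ in (1:ℝ)..M, max (p i - γ * q i) 0 / γ)
      + (∫ γ in (1:ℝ)..M, max (q i - γ * p i) 0 / γ ^ 2)
      = p i * Real.log (p i / q i) - p i + q i := fun i _ =>
    scalar_id (p i) (q i) M (hp i) (hq i) hM (h1 i) (h2 i)
  rw [Finset.sum_congr rfl this]
  simp only [Finset.sum_add_distrib, Finset.sum_sub_distrib, hp1, hq1, Dkl]
  ring

lemma vecMul_apply {n : ℕ} (p : Fin n → ℝ) (W : Matrix (Fin n) (Fin n) ℝ) (i : Fin n) :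
    Matrix.vecMul p W i = ∑ a, p a * W a i := by
  simp [Matrix.vecMul, dotProduct]

lemma dobrushin_le {n : ℕ} (W : Matrix (Fin n) (Fin n) ℝ) (a b : Fin n) :
    dobrushin W ≤ ∑ i, min (W a i) (W b i) := by
  exact ciInf_le (Set.Finite.bddBelow (Set.finite_range _)) (a, b)

/-- hockey-stick contraction -/
lemma Econtract {n : ℕ} (hn : 0 < n) (W : Matrix (Fin n) (Fin n) ℝ)
    (hW0 : ∀ a b, 0 ≤ W a b) (hW1 : ∀ a, ∑ b, W a b = 1)
    (p q : Fin n → ℝ) (hp1 : ∑ i, p i = 1) (hq1 : ∑ i, q i = 1)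
    (γ : ℝ) (hγ : 1 ≤ γ) :
    ∑ i, max (Matrix.vecMul p W i - γ * Matrix.vecMul q W i) 0 ≤
      (1 - dobrushin W) * ∑ a, max (p a - γ * q a) 0 := by
  classical
  set d : Fin n → ℝ := fun a => p a - γ * q a with hd
  set v : Fin n → ℝ := fun i => ∑ a, d a * W a i with hv
  have hvi : ∀ i, Matrix.vecMul p W i - γ * Matrix.vecMul q W i = v i := by
    intro i
    rw [vecMul_apply, vecMul_apply, hv]
    simp only [hd]
    rw [Finset.mul_sum, ← Finset.sum_sub_distrib]
    congr 1; funext a; ring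
  set A : Finset (Fin n) := Finset.univ.filter (fun i => 0 < v i) with hA
  have hmax : ∀ i : Fin n, max (v i) 0 = if 0 < v i then v i else 0 := by
    intro i
    by_cases h : 0 < v i
    · rw [if_pos h, max_eq_left h.le]
    · rw [if_neg h, max_eq_right (not_lt.1 h)]
  have step1 : ∑ i, max (Matrix.vecMul p W i - γ * Matrix.vecMul q W i) 0 = ∑ i ∈ A, v i := by
    rw [Finset.sum_filter]
    rw [Finset.sum_congr rfl (fun i _ => by rw [hvi i, hmax i])]
  -- swap sums
  have step2 : ∑ i ∈ A, v i = ∑ a, d a * (∑ i ∈ A, W a i) := by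
    rw [hv, Finset.sum_comm]
    congr 1; funext a; rw [Finset.mul_sum]
  set WA : Fin n → ℝ := fun a => ∑ i ∈ A, W a i with hWA
  have hWA0 : ∀ a, 0 ≤ WA a := fun a => Finset.sum_nonneg (fun i _ => hW0 a i)
  -- minimizing row
  have hne : (Finset.univ : Finset (Fin n)).Nonempty := by
    rw [Finset.univ_nonempty_iff]
    exact Fin.pos_iff_nonempty.1 hn
  obtain ⟨b0, _, hb0⟩ := Finset.exists_min_image Finset.univ WA hne
  have hWAle : ∀ a, WA a - WA b0 ≤ 1 - dobrushin W := by
    intro a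
    have h1 : WA a - WA b0 ≤ ∑ i, (W a i - min (W a i) (W b0 i)) := by
      have : WA a - WA b0 = ∑ i ∈ A, (W a i - W b0 i) := by
        rw [hWA, Finset.sum_sub_distrib]
      rw [this]
      apply le_trans (Finset.sum_le_sum (g := fun i => W a i - min (W a i) (W b0 i))
        (fun i _ => by
          show W a i - W b0 i ≤ W a i - min (W a i) (W b0 i)
          have : min (W a i) (W b0 i) ≤ W b0 i := min_le_right _ _
          linarith))
      apply Finset.sum_le_sum_of_subset_of_nonneg (Finset.subset_univ A)
      intro i _ _
      show 0 ≤ W a i - min (W a i) (W b0 i)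
      have : min (W a i) (W b0 i) ≤ W a i := min_le_left _ _
      linarith
    have h2 : ∑ i, (W a i - min (W a i) (W b0 i)) = 1 - ∑ i, min (W a i) (W b0 i) := by
      rw [Finset.sum_sub_distrib, hW1 a]
    have h3 := dobrushin_le W a b0
    linarith
  have hsum_d : ∑ a, d a = 1 - γ := by
    simp only [hd]
    rw [Finset.sum_sub_distrib, hp1, ← Finset.mul_sum, hq1, mul_one]
  calc ∑ i, max (Matrix.vecMul p W i - γ * Matrix.vecMul q W i) 0
      = ∑ a, d a * WA a := by rw [step1, step2]
    _ = (∑ a, d a * (WA a - WA b0)) + WA b0 * ∑ a, d a := by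
        rw [Finset.mul_sum, ← Finset.sum_add_distrib]
        congr 1; funext a; ring
    _ ≤ ∑ a, d a * (WA a - WA b0) := by
        have : WA b0 * ∑ a, d a ≤ 0 := by
          rw [hsum_d]
          apply mul_nonpos_of_nonneg_of_nonpos (hWA0 b0)
          linarith
        linarith
    _ ≤ ∑ a, max (d a) 0 * (1 - dobrushin W) := by
        apply Finset.sum_le_sum
        intro a _
        have h1 : WA a - WA b0 ≥ 0 := by have := hb0 a (Finset.mem_univ a); linarith
        have h2 : d a ≤ max (d a) 0 := le_max_left _ _
        have h3 : (0:ℝ) ≤ max (d a) 0 := le_max_right _ _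
        nlinarith [hWAle a]
    _ = (1 - dobrushin W) * ∑ a, max (d a) 0 := by
        rw [Finset.mul_sum]; congr 1; funext a; ring

lemma sum_vecMul {n : ℕ} (p : Fin n → ℝ) (W : Matrix (Fin n) (Fin n) ℝ)
    (hW1 : ∀ a, ∑ b, W a b = 1) (hp1 : ∑ i, p i = 1) :
    ∑ i, Matrix.vecMul p W i = 1 := by
  rw [Finset.sum_congr rfl (fun i _ => _root_.vecMul_apply p W i), Finset.sum_comm]
  rw [Finset.sum_congr rfl (fun a (_ : a ∈ Finset.univ) => by rw [← Finset.mul_sum, hW1 a, mul_one])]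
  exact hp1

/-- KL contraction by the Dobrushin coefficient. -/
lemma kl_contract {n : ℕ} (hn : 0 < n) (W : Matrix (Fin n) (Fin n) ℝ)
    (hW0 : ∀ a b, 0 ≤ W a b) (hW1 : ∀ a, ∑ b, W a b = 1)
    (p q : Fin n → ℝ) (hp : ∀ i, 0 < p i) (hq : ∀ i, 0 < q i)
    (hp1 : ∑ i, p i = 1) (hq1 : ∑ i, q i = 1)
    (hpW : ∀ i, 0 < Matrix.vecMul p W i) (hqW : ∀ i, 0 < Matrix.vecMul q W i) :
    Dkl (Matrix.vecMul p W) (Matrix.vecMul q W) ≤ (1 - dobrushin W) * Dkl p q := by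
  classical
  set p' := Matrix.vecMul p W
  set q' := Matrix.vecMul q W
  set M : ℝ := 1 + ∑ i, (p i / q i + q i / p i + p' i / q' i + q' i / p' i) with hM
  have hterm : ∀ i, 0 ≤ p i / q i + q i / p i + p' i / q' i + q' i / p' i := by
    intro i
    have := hp i; have := hq i; have := hpW i; have := hqW i
    positivity
  have hM1 : 1 ≤ M := by
    rw [hM]
    have : 0 ≤ ∑ i, (p i / q i + q i / p i + p' i / q' i + q' i / p' i) :=
      Finset.sum_nonneg (fun i _ => hterm i)
    linarith
  have key : ∀ i, p i / q i ≤ p i / q i + q i / p i + p' i / q' i + q' i / p' i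
      ∧ q i / p i ≤ p i / q i + q i / p i + p' i / q' i + q' i / p' i
      ∧ p' i / q' i ≤ p i / q i + q i / p i + p' i / q' i + q' i / p' i
      ∧ q' i / p' i ≤ p i / q i + q i / p i + p' i / q' i + q' i / p' i := by
    intro i
    have h1 : 0 ≤ p i / q i := by have := hp i; have := hq i; positivity
    have h2 : 0 ≤ q i / p i := by have := hp i; have := hq i; positivity
    have h3 : 0 ≤ p' i / q' i := by have := hpW i; have := hqW i; positivity
    have h4 : 0 ≤ q' i / p' i := by have := hpW i; have := hqW i; positivity
    refine ⟨by linarith, by linarith, by linarith, by linarith⟩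
  have hbound : ∀ (f : Fin n → ℝ), (∀ i, f i ≤ p i / q i + q i / p i + p' i / q' i + q' i / p' i)
      → ∀ i, f i ≤ M := by
    intro f hf i
    have := Finset.single_le_sum (f := fun i => p i / q i + q i / p i + p' i / q' i + q' i / p' i)
      (fun i _ => hterm i) (Finset.mem_univ i)
    rw [hM]
    linarith [hf i]
  have hp'1 : ∑ i, p' i = 1 := sum_vecMul p W hW1 hp1
  have hq'1 : ∑ i, q' i = 1 := sum_vecMul q W hW1 hq1
  have idin := sum_id p q hp hq hp1 hq1 M hM1
    (hbound _ (fun i => (key i).1)) (hbound _ (fun i => (key i).2.1))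
  have idout := sum_id p' q' hpW hqW hp'1 hq'1 M hM1
    (hbound _ (fun i => (key i).2.2.1)) (hbound _ (fun i => (key i).2.2.2))
  rw [← idout, ← idin]
  have c1 : (∫ γ in (1:ℝ)..M, (∑ i, max (p' i - γ * q' i) 0) / γ)
      ≤ ∫ γ in (1:ℝ)..M, (1 - dobrushin W) * ((∑ i, max (p i - γ * q i) 0) / γ) := by
    apply intervalIntegral.integral_mono_on hM1 (intgF p' q' M hM1)
      ((intgF p q M hM1).const_mul _)
    intro γ hγ
    have hγ1 : 1 ≤ γ := hγ.1
    have hγ0 : 0 < γ := by linarith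
    have hE := Econtract hn W hW0 hW1 p q hp1 hq1 γ hγ1
    rw [← mul_div_assoc]
    exact (div_le_div_iff_of_pos_right hγ0).2 hE
  have c2 : (∫ γ in (1:ℝ)..M, (∑ i, max (q' i - γ * p' i) 0) / γ ^ 2)
      ≤ ∫ γ in (1:ℝ)..M, (1 - dobrushin W) * ((∑ i, max (q i - γ * p i) 0) / γ ^ 2) := by
    apply intervalIntegral.integral_mono_on hM1 (intgG q' p' M hM1)
      ((intgG q p M hM1).const_mul _)
    intro γ hγ
    have hγ1 : 1 ≤ γ := hγ.1
    have hγ0 : (0:ℝ) < γ ^ 2 := by positivity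
    have hE := Econtract hn W hW0 hW1 q p hq1 hp1 γ hγ1
    rw [← mul_div_assoc]
    exact (div_le_div_iff_of_pos_right hγ0).2 hE
  have e1 : (∫ γ in (1:ℝ)..M, (1 - dobrushin W) * ((∑ i, max (p i - γ * q i) 0) / γ))
      = (1 - dobrushin W) * ∫ γ in (1:ℝ)..M, (∑ i, max (p i - γ * q i) 0) / γ :=
    intervalIntegral.integral_const_mul _ _
  have e2 : (∫ γ in (1:ℝ)..M, (1 - dobrushin W) * ((∑ i, max (q i - γ * p i) 0) / γ ^ 2))
      = (1 - dobrushin W) * ∫ γ in (1:ℝ)..M, (∑ i, max (q i - γ * p i) 0) / γ ^ 2 :=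
    intervalIntegral.integral_const_mul _ _
  rw [e1] at c1
  rw [e2] at c2
  rw [mul_add]
  linarith

lemma upperRS_one {n : ℕ} : UpperRS (1 : Matrix (Fin n) (Fin n) ℝ) := by
  refine ⟨fun i j => ?_, fun i j h => ?_, fun i => ?_⟩
  · rw [Matrix.one_apply]; split <;> norm_num
  · rw [Matrix.one_apply_ne (by exact fun he => absurd he.symm (ne_of_lt h))]
  · simp [Matrix.one_apply]

lemma upperRS_mul {n : ℕ} (A B : Matrix (Fin n) (Fin n) ℝ)
    (hA : UpperRS A) (hB : UpperRS B) : UpperRS (A * B) := by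
  obtain ⟨hA0, hAt, hA1⟩ := hA
  obtain ⟨hB0, hBt, hB1⟩ := hB
  refine ⟨fun i j => ?_, fun i j h => ?_, fun i => ?_⟩
  · rw [Matrix.mul_apply]
    exact Finset.sum_nonneg (fun k _ => mul_nonneg (hA0 i k) (hB0 k j))
  · rw [Matrix.mul_apply]
    apply Finset.sum_eq_zero
    intro k _
    rcases lt_or_ge k i with hk | hk
    · rw [hAt i k hk, zero_mul]
    · have : j < k := lt_of_lt_of_le h hk
      rw [hBt k j this, mul_zero]
  · rw [Finset.sum_congr rfl (fun j (_ : j ∈ Finset.univ) => Matrix.mul_apply (M := A) (N := B)),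
      Finset.sum_comm]
    rw [Finset.sum_congr rfl (fun k (_ : k ∈ Finset.univ) => by rw [← Finset.mul_sum, hB1 k])]
    simp only [mul_one]
    exact hA1 i

lemma upperRS_prod {n : ℕ} (l : List (Matrix (Fin n) (Fin n) ℝ))
    (h : ∀ A ∈ l, UpperRS A) : UpperRS l.prod := by
  induction l with
  | nil => exact upperRS_one
  | cons A l ih =>
    rw [List.prod_cons]
    exact upperRS_mul _ _ (h A List.mem_cons_self)
      (ih (fun B hB => h B (List.mem_cons_of_mem A hB)))

lemma upperRS_BMat {n : ℕ} (i j : Fin n) (lam : ℝ) (hij : i < j)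
    (h0 : 0 ≤ lam) (h1 : lam ≤ 1) : UpperRS (BMat i j lam) := by
  have hne : i ≠ j := ne_of_lt hij
  refine ⟨fun a b => ?_, fun a b h => ?_, fun a => ?_⟩
  · unfold BMat
    by_cases ha : a = i <;> by_cases hbi : b = i <;> by_cases hbj : b = j <;>
      by_cases hab : a = b <;> simp [ha, hbi, hbj, hab, Ne.symm hne] <;>
      first
      | linarith
      | (split <;> linarith)
  · unfold BMat
    by_cases ha : a = i
    · have hbi : b ≠ i := by rw [← ha]; exact ne_of_lt h
      have hbj : b ≠ j := ne_of_lt (lt_trans (ha ▸ h) hij)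
      simp [ha, hbi, hbj]
    · have hab : a ≠ b := (ne_of_lt h).symm
      simp [ha, hab]
  · by_cases ha : a = i
    · rw [ha]
      have e : ∀ b, BMat i j lam i b
          = (if b = i then 1 - lam else 0) + (if b = j then lam else 0) := by
        intro b
        unfold BMat
        by_cases hbi : b = i
        · subst hbi
          simp [hne]
        · by_cases hbj : b = j <;> simp [hbi, hbj, Ne.symm hne]
      rw [Finset.sum_congr rfl (fun b _ => e b), Finset.sum_add_distrib,
        Finset.sum_ite_eq' Finset.univ i (fun _ => 1 - lam),
        Finset.sum_ite_eq' Finset.univ j (fun _ => lam)]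
      simp
    · have e : ∀ b, BMat i j lam a b = (if b = a then 1 else 0) := by
        intro b
        unfold BMat
        rw [if_neg ha]
        by_cases hab : a = b
        · subst hab; simp
        · rw [if_neg hab, if_neg (fun h : b = a => hab h.symm)]
      rw [Finset.sum_congr rfl (fun b _ => e b),
        Finset.sum_ite_eq' Finset.univ a (fun _ => (1:ℝ))]
      simp

lemma row_off_diag {n : ℕ} (U : Matrix (Fin n) (Fin n) ℝ) (hU0 : ∀ a b, 0 ≤ U a b)
    (hU1 : ∀ a, ∑ b, U a b = 1) (i : Fin n) (hdiag : U i i = 1) :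
    ∀ k, k ≠ i → U i k = 0 := by
  intro k hk
  have hsplit : ∑ b, U i b = U i i + ∑ b ∈ Finset.univ.erase i, U i b := by
    rw [← Finset.add_sum_erase _ _ (Finset.mem_univ i)]
  have h0 : ∑ b ∈ Finset.univ.erase i, U i b = 0 := by
    rw [hU1 i, hdiag] at hsplit
    linarith
  have := (Finset.sum_eq_zero_iff_of_nonneg (fun b _ => hU0 i b)).1 h0 k
    (Finset.mem_erase.2 ⟨hk, Finset.mem_univ k⟩)
  exact this

lemma triangular_ds_eq_one {n : ℕ} (U : Matrix (Fin n) (Fin n) ℝ)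
    (hU : UpperRS U) (hc : ∀ i, ∑ j, U j i = 1) : U = 1 := by
  obtain ⟨hU0, hUt, hU1⟩ := hU
  have diag : ∀ m : ℕ, ∀ j : Fin n, (j : ℕ) = m → U j j = 1 := by
    intro m
    induction m using Nat.strong_induction_on with
    | _ m IH =>
      intro j hj
      have hrow0 : ∀ i : Fin n, i < j → U i j = 0 := by
        intro i hij
        have hUii : U i i = 1 := IH i.val (hj ▸ hij) i rfl
        exact row_off_diag U hU0 hU1 i hUii j (ne_of_gt hij)
      have hsplit : ∑ i, U i j = U j j + ∑ i ∈ Finset.univ.erase j, U i j := by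
        rw [← Finset.add_sum_erase _ _ (Finset.mem_univ j)]
      have hz : ∑ i ∈ Finset.univ.erase j, U i j = 0 := by
        apply Finset.sum_eq_zero
        intro i hi
        rcases lt_or_gt_of_ne (Finset.mem_erase.1 hi).1 with h | h
        · exact hrow0 i h
        · exact hUt i j h
      rw [hc j, hz, add_zero] at hsplit
      exact hsplit.symm
  ext i k
  rw [Matrix.one_apply]
  by_cases hik : i = k
  · rw [if_pos hik, hik]
    exact diag k.val k rfl
  · rw [if_neg hik]
    exact row_off_diag U hU0 hU1 i (diag i.val i rfl) k (fun h => hik h.symm)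

lemma sum_mul_logb {n : ℕ} (w g : Fin n → ℝ) :
    ∑ i, w i * Real.logb 2 (g i) = (∑ i, w i * Real.log (g i)) / Real.log 2 := by
  rw [Finset.sum_div]
  apply Finset.sum_congr rfl
  intro i _
  rw [← Real.log_div_log, mul_div_assoc]

end AuxKL

theorem stmt17 {n : ℕ} (hn : 1 < n) (x y : Fin n → ℝ)
    (hx0 : ∀ i, 0 < x i) (hx1 : ∑ i, x i = 1)
    (hy0 : ∀ i, 0 < y i) (hy1 : ∑ i, y i = 1)
    (hxs : Antitone x) (hys : Antitone y)
    (hmaj : Maj x y) (hne : x ≠ y)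
    (s : ℕ) (z : ℕ → Fin n → ℝ) (jj kk : ℕ → Fin n) (lam : ℕ → ℝ)
    (hchain : CanonChain x y s z jj kk lam)
    (U : Matrix (Fin n) (Fin n) ℝ)
    (hU : U = (((List.range s).map (fun t => BMat (jj t) (kk t) (lam t))).prod)) :
    ((1 - dobrushin U) * shannonH y +
        (∑ i, x i * Real.logb 2 (1 / Matrix.vecMul (fun _ : Fin n => (1 : ℝ) / n) U i)) -
        (1 - dobrushin U) * Real.logb 2 n ≤ shannonH x) ∧
    (dobrushin U * Real.logb 2 n + (1 - dobrushin U) * shannonH y <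
      (1 - dobrushin U) * shannonH y +
        (∑ i, x i * Real.logb 2 (1 / Matrix.vecMul (fun _ : Fin n => (1 : ℝ) / n) U i)) -
        (1 - dobrushin U) * Real.logb 2 n) := by
  classical
  -- basic facts
  have hn0 : 0 < n := lt_trans Nat.zero_lt_one hn
  have hnR1 : (1:ℝ) < (n:ℝ) := by exact_mod_cast hn
  have hnR0 : (0:ℝ) < (n:ℝ) := by linarith
  have hnne : (n:ℝ) ≠ 0 := ne_of_gt hnR0
  -- lambda bounds
  have hzpos : ∀ t, t < s → 0 < z t (jj t) := fun t ht =>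
    lt_trans (hx0 (jj t)) (hchain.j_big t ht)
  have hlam0 : ∀ t, t < s → 0 ≤ lam t := by
    intro t ht
    rw [hchain.lam_def t ht]
    apply div_nonneg _ (hzpos t ht).le
    have h1 := hchain.j_big t ht
    have h2 := hchain.k_small t ht
    exact le_min (by linarith) (by linarith)
  have hlam1 : ∀ t, t < s → lam t ≤ 1 := by
    intro t ht
    rw [hchain.lam_def t ht]
    rw [div_le_one (hzpos t ht)]
    have h1 := min_le_left (z t (jj t) - x (jj t)) (x (kk t) - z t (kk t))
    have := hx0 (jj t)
    linarith
  -- U is upper triangular row-stochastic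
  have hUrs : UpperRS U := by
    rw [hU]
    apply upperRS_prod
    intro A hA
    rw [List.mem_map] at hA
    obtain ⟨t, htmem, rfl⟩ := hA
    rw [List.mem_range] at htmem
    exact upperRS_BMat _ _ _ (hchain.lt t htmem) (hlam0 t htmem) (hlam1 t htmem)
  obtain ⟨hU0, hUt, hU1⟩ := hUrs
  -- x = y U
  have hxy : x = Matrix.vecMul y U := by
    have key : ∀ t, t ≤ s →
        z t = Matrix.vecMul y (((List.range t).map
          (fun r => BMat (jj r) (kk r) (lam r))).prod) := by
      intro t
      induction t with
      | zero =>
        intro _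
        simp only [List.range_zero, List.map_nil, List.prod_nil, Matrix.vecMul_one]
        exact hchain.z_zero
      | succ t ih =>
        intro h
        have ht : t < s := lt_of_lt_of_le (Nat.lt_succ_self t) h
        rw [List.range_succ, List.map_append, List.prod_append]
        simp only [List.map_cons, List.map_nil, List.prod_cons, List.prod_nil, mul_one]
        rw [← Matrix.vecMul_vecMul, ← ih (le_of_lt ht)]
        exact hchain.step t ht
    rw [← hchain.z_last, key s le_rfl, hU]
  -- column sums
  set c : Fin n → ℝ := fun i => ∑ a, U a i with hc
  have hx_eq : ∀ i, x i = ∑ a, y a * U a i := by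
    intro i; rw [hxy, vecMul_apply]
  have hc_nonneg : ∀ i, 0 ≤ c i := fun i => Finset.sum_nonneg (fun a _ => hU0 a i)
  have hc_pos : ∀ i, 0 < c i := by
    intro i
    rcases lt_or_eq_of_le (hc_nonneg i) with h | h
    · exact h
    · exfalso
      have hz : ∀ a ∈ Finset.univ, U a i = 0 :=
        (Finset.sum_eq_zero_iff_of_nonneg (fun a _ => hU0 a i)).1 h.symm
      have : x i = 0 := by
        rw [hx_eq i]
        apply Finset.sum_eq_zero
        intro a ha
        rw [hz a ha, mul_zero]
      exact absurd this (ne_of_gt (hx0 i))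
  -- uniform vector
  set u : Fin n → ℝ := fun _ => (1:ℝ)/n with hu
  have hu_pos : ∀ i : Fin n, 0 < u i := fun i => by
    simp only [hu]; positivity
  have hu1 : ∑ i : Fin n, u i = 1 := by
    simp only [hu, Finset.sum_const, Finset.card_univ, Fintype.card_fin, nsmul_eq_mul]
    field_simp
  set q' : Fin n → ℝ := Matrix.vecMul u U with hq'
  have hq'c : ∀ i, q' i = c i / n := by
    intro i
    rw [hq', vecMul_apply]
    have e : ∀ a : Fin n, u a * U a i = U a i / n := by
      intro a; simp only [hu]; ring
    rw [Finset.sum_congr rfl fun a _ => e a, ← Finset.sum_div]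
  have hq'pos : ∀ i, 0 < q' i := by
    intro i; rw [hq'c i]; exact div_pos (hc_pos i) hnR0
  -- sum x*c ≤ 1
  have hxc : ∑ i, x i * c i ≤ 1 := by
    have swap : ∑ i, x i * c i = ∑ a, ∑ i, U a i * x i := by
      simp only [hc]
      calc ∑ i, x i * ∑ a, U a i = ∑ i, ∑ a, U a i * x i := by
            apply Finset.sum_congr rfl; intro i _
            rw [Finset.mul_sum]
            apply Finset.sum_congr rfl; intro a _
            ring
        _ = ∑ a, ∑ i, U a i * x i := Finset.sum_comm
    have bound : ∀ a : Fin n, ∑ i, U a i * x i ≤ x a := by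
      intro a
      have : ∑ i, U a i * x i ≤ ∑ i, U a i * x a := by
        apply Finset.sum_le_sum
        intro i _
        rcases lt_or_ge i a with h | h
        · rw [hUt a i h, zero_mul, zero_mul]
        · exact mul_le_mul_of_nonneg_left (hxs h) (hU0 a i)
      rw [← Finset.sum_mul, hU1 a, one_mul] at this
      exact this
    calc ∑ i, x i * c i = ∑ a, ∑ i, U a i * x i := swap
      _ ≤ ∑ a, x a := Finset.sum_le_sum (fun a _ => bound a)
      _ = 1 := hx1
  -- some column sum differs from 1
  have hex : ∃ i0 : Fin n, c i0 ≠ 1 := by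
    by_contra hall
    push_neg at hall
    have : U = 1 := triangular_ds_eq_one U ⟨hU0, hUt, hU1⟩ (fun i => hall i)
    rw [this, Matrix.vecMul_one] at hxy
    exact hne hxy
  -- strict: sum x_i log c_i < 0
  have hsc : ∑ i, x i * Real.log (c i) < 0 := by
    obtain ⟨i0, hi0⟩ := hex
    have hlt : ∑ i, x i * Real.log (c i) < ∑ i, x i * (c i - 1) := by
      apply Finset.sum_lt_sum
      · intro i _
        exact mul_le_mul_of_nonneg_left
          (Real.log_le_sub_one_of_pos (hc_pos i)) (hx0 i).le
      · exact ⟨i0, Finset.mem_univ i0, by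
          exact (mul_lt_mul_iff_right₀ (hx0 i0)).2 (Real.log_lt_sub_one_of_pos (hc_pos i0) hi0)⟩
    have he : ∑ i, x i * (c i - 1) = (∑ i, x i * c i) - 1 := by
      have : ∀ i : Fin n, x i * (c i - 1) = x i * c i - x i := fun i => by ring
      rw [Finset.sum_congr rfl fun i _ => this i, Finset.sum_sub_distrib, hx1]
    linarith
  -- contraction
  have hxW : ∀ i, 0 < Matrix.vecMul y U i := by
    intro i; rw [← hxy]; exact hx0 i
  have K : Dkl (Matrix.vecMul y U) (Matrix.vecMul u U) ≤ (1 - dobrushin U) * Dkl y u :=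
    kl_contract hn0 U hU0 hU1 y u hy0 hu_pos hy1 hu1 hxW (by rw [← hq']; exact hq'pos)
  rw [← hxy, ← hq'] at K
  have hL0 : (0:ℝ) < Real.log 2 := Real.log_pos (by norm_num)
  have F4 : Dkl x q' = (∑ i, x i * Real.log (x i)) - (∑ i, x i * Real.log (q' i)) := by
    unfold Dkl
    rw [← Finset.sum_sub_distrib]
    apply Finset.sum_congr rfl
    intro i _
    rw [Real.log_div (hx0 i).ne' (hq'pos i).ne']
    ring
  have F5 : Dkl y u = (∑ i, y i * Real.log (y i)) + Real.log n := by
    unfold Dkl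
    have e : ∀ i : Fin n, y i * Real.log (y i / u i)
        = y i * Real.log (y i) + y i * Real.log n := by
      intro i
      simp only [hu]
      rw [div_div_eq_mul_div, div_one, Real.log_mul (hy0 i).ne' hnne]
      ring
    rw [Finset.sum_congr rfl fun i _ => e i, Finset.sum_add_distrib, ← Finset.sum_mul, hy1,
      one_mul]
  rw [F4, F5] at K
  have hsq : (∑ i, x i * Real.log (q' i)) = (∑ i, x i * Real.log (c i)) - Real.log n := by
    have e : ∀ i : Fin n, x i * Real.log (q' i)
        = x i * Real.log (c i) - x i * Real.log n := by
      intro i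
      rw [hq'c i, Real.log_div (hc_pos i).ne' hnne]
      ring
    rw [Finset.sum_congr rfl fun i _ => e i, Finset.sum_sub_distrib, ← Finset.sum_mul, hx1,
      one_mul]
  have F1 : shannonH x = -((∑ i, x i * Real.log (x i)) / Real.log 2) := by
    simp only [shannonH]; rw [sum_mul_logb]
  have F2 : shannonH y = -((∑ i, y i * Real.log (y i)) / Real.log 2) := by
    simp only [shannonH]; rw [sum_mul_logb]
  have F3 : (∑ i, x i * Real.logb 2 (1 / q' i))
      = -((∑ i, x i * Real.log (q' i)) / Real.log 2) := by
    rw [sum_mul_logb, ← neg_div, ← Finset.sum_neg_distrib]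
    congr 1
    apply Finset.sum_congr rfl
    intro i _
    rw [one_div, Real.log_inv]
    ring
  have F6 : Real.logb 2 (n : ℝ) = Real.log n / Real.log 2 := (Real.log_div_log).symm
  have hsqlt : (∑ i, x i * Real.log (q' i)) < -Real.log n + 0 := by
    rw [hsq]; linarith [hsc]
  constructor
  · rw [F1, F2, F3, F6]
    have expand : (1 - dobrushin U) * -((∑ i, y i * Real.log (y i)) / Real.log 2) +
        -((∑ i, x i * Real.log (q' i)) / Real.log 2) -
        (1 - dobrushin U) * (Real.log n / Real.log 2)
        = ((1 - dobrushin U) * (-(∑ i, y i * Real.log (y i))) +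
            (-(∑ i, x i * Real.log (q' i))) -
            (1 - dobrushin U) * Real.log n) / Real.log 2 := by
      field_simp
    rw [expand, ← neg_div]
    rw [div_le_div_iff_of_pos_right hL0]
    nlinarith [K]
  · rw [F2, F3, F6]
    have expand2 : (1 - dobrushin U) * -((∑ i, y i * Real.log (y i)) / Real.log 2) +
        -((∑ i, x i * Real.log (q' i)) / Real.log 2) -
        (1 - dobrushin U) * (Real.log n / Real.log 2)
        = ((1 - dobrushin U) * (-(∑ i, y i * Real.log (y i))) +
            (-(∑ i, x i * Real.log (q' i))) -
            (1 - dobrushin U) * Real.log n) / Real.log 2 := by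
      field_simp
    have expand1 : dobrushin U * (Real.log n / Real.log 2) +
        (1 - dobrushin U) * -((∑ i, y i * Real.log (y i)) / Real.log 2)
        = (dobrushin U * Real.log n +
            (1 - dobrushin U) * (-(∑ i, y i * Real.log (y i)))) / Real.log 2 := by
      field_simp
      try ring
    rw [expand1, expand2]
    rw [div_lt_div_iff_of_pos_right hL0]
    nlinarith [hsqlt]
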